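/- Let R ⊆ {0,1}^n be closed under the ternary majority function m(x,y,z) = (x∧y)∨(y∧z)∨(x∧z) (applied coordinatewise), and suppose every pair of tuples in R has Hamming distance at most 2. If R contains three distinct tuples t₁, t₂, t₃ with t₂ = t₁ ⊕ A and t₃ = t₁ ⊕ B where |A| = |B| = 2 and |A ∪ B| = 3, then setting t = m(t₁,t₂,t₃), every tuple t' ∈ R satisfies d_H(t, t') ≤ 1. -/

import Mathlib

open symmDiff


def flipSet {n : ℕ} (A : Finset (Fin n)) (t : Fin n → Bool) : Fin n → Bool :=
  fun i => if i ∈ A then !t i else t i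


def maj {n : ℕ} (x y z : Fin n → Bool) : Fin n → Bool :=
  fun i => (x i && y i) || (y i && z i) || (x i && z i)

lemma pair_other {α : Type*} [DecidableEq α] (A : Finset α) (hA : A.card = 2) (c : α)
    (hc : c ∈ A) : ∃ a, a ≠ c ∧ A = {a, c} := by
  obtain ⟨x, y, hxy, rfl⟩ := Finset.card_eq_two.mp hA
  simp only [Finset.mem_insert, Finset.mem_singleton] at hc
  rcases hc with rfl | rfl
  · exact ⟨y, hxy.symm, by ext i; simp; tauto⟩
  · exact ⟨x, hxy, rfl⟩

lemma ham_flip {n : ℕ} (S : Finset (Fin n)) (u v : Fin n → Bool) :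
    hammingDist (flipSet S u) v = (S ∆ (Finset.univ.filter fun i => u i ≠ v i)).card := by
  simp only [hammingDist]
  congr 1
  ext i
  rw [Finset.mem_filter]
  by_cases h : i ∈ S <;>
    simp [flipSet, h, Finset.mem_symmDiff] <;> cases u i <;> cases v i <;> simp

lemma symmDiff_single_mem {α : Type*} [DecidableEq α] {c : α} {E : Finset α} (h : c ∈ E) :
    ({c} : Finset α) ∆ E = E.erase c := by
  ext i
  simp [Finset.mem_symmDiff, Finset.mem_erase]
  constructor
  · rintro (⟨rfl, h2⟩ | ⟨h1, h2⟩)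
    · exact absurd h h2
    · exact ⟨h2, h1⟩
  · rintro ⟨h1, h2⟩; exact Or.inr ⟨h2, h1⟩

lemma symmDiff_single_not {α : Type*} [DecidableEq α] {c : α} {E : Finset α} (h : c ∉ E) :
    ({c} : Finset α) ∆ E = insert c E := by
  ext i
  simp [Finset.mem_symmDiff, Finset.mem_insert]
  constructor
  · rintro (⟨rfl, _⟩ | ⟨h1, _⟩)
    · exact Or.inl rfl
    · exact Or.inr h1
  · rintro (rfl | h1)
    · exact Or.inl ⟨rfl, h⟩
    · refine Or.inr ⟨h1, ?_⟩; rintro rfl; exact h h1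

theorem majority_close_tuples {n : ℕ} (R : Set (Fin n → Bool))
    (hclosed : ∀ x ∈ R, ∀ y ∈ R, ∀ z ∈ R, maj x y z ∈ R)
    (hdist : ∀ x ∈ R, ∀ y ∈ R, hammingDist x y ≤ 2)
    (t₁ t₂ t₃ : Fin n → Bool) (ht₁ : t₁ ∈ R) (ht₂ : t₂ ∈ R) (ht₃ : t₃ ∈ R)
    (h12 : t₁ ≠ t₂) (h13 : t₁ ≠ t₃) (h23 : t₂ ≠ t₃)
    (A B : Finset (Fin n)) (hA : t₂ = flipSet A t₁) (hB : t₃ = flipSet B t₁)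
    (hcA : A.card = 2) (hcB : B.card = 2) (hAB : (A ∪ B).card = 3) :
    ∀ t' ∈ R, hammingDist (maj t₁ t₂ t₃) t' ≤ 1 := by
  subst hA hB
  -- extract c : the common element
  have hinter : (A ∩ B).card = 1 := by
    have := Finset.card_union_add_card_inter A B
    omega
  obtain ⟨c, hc⟩ := Finset.card_eq_one.mp hinter
  have hcA' : c ∈ A := by
    have : c ∈ A ∩ B := hc ▸ Finset.mem_singleton_self c
    exact (Finset.mem_inter.mp this).1
  have hcB' : c ∈ B := by
    have : c ∈ A ∩ B := hc ▸ Finset.mem_singleton_self c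
    exact (Finset.mem_inter.mp this).2
  obtain ⟨a, hac, hAeq⟩ := pair_other A hcA c hcA'
  obtain ⟨b, hbc, hBeq⟩ := pair_other B hcB c hcB'
  have hab : a ≠ b := by
    rintro rfl
    have haB : a ∈ B := by rw [hBeq]; simp
    have haA : a ∈ A := by rw [hAeq]; simp
    have : a ∈ A ∩ B := Finset.mem_inter.mpr ⟨haA, haB⟩
    rw [hc] at this
    exact hac (Finset.mem_singleton.mp this)
  -- maj t₁ t₂ t₃ = flipSet {c} t₁
  have hmemAB : ∀ i, i ∈ A → i ∈ B → i = c := by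
    intro i h1 h2
    have : i ∈ A ∩ B := Finset.mem_inter.mpr ⟨h1, h2⟩
    rw [hc] at this
    exact Finset.mem_singleton.mp this
  have hteq : maj t₁ (flipSet A t₁) (flipSet B t₁) = flipSet {c} t₁ := by
    funext i
    by_cases h1 : i ∈ A <;> by_cases h2 : i ∈ B
    · have : i = c := hmemAB i h1 h2
      subst this
      simp [maj, flipSet, h1, h2]
      try (cases t₁ i <;> simp)
    · have hic : i ≠ c := by rintro rfl; exact h2 hcB'
      simp [maj, flipSet, h1, h2, hic]
      try (cases t₁ i <;> simp)
    · have hic : i ≠ c := by rintro rfl; exact h1 hcA'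
      simp [maj, flipSet, h1, h2, hic]
      try (cases t₁ i <;> simp)
    · have hic : i ≠ c := by rintro rfl; exact h1 hcA'
      simp [maj, flipSet, h1, h2, hic]
      try (cases t₁ i <;> simp)
  rw [hteq]
  intro t' ht'
  by_contra hcon
  push_neg at hcon
  set E : Finset (Fin n) := Finset.univ.filter fun i => t₁ i ≠ t' i with hE
  have hEcard : E.card ≤ 2 := by
    have := hdist t₁ ht₁ t' ht'
    simpa [hammingDist, hE] using this
  have hmain : 2 ≤ (({c} : Finset (Fin n)) ∆ E).card := by
    rw [ham_flip] at hcon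
    exact hcon
  -- c ∉ E
  have hcE : c ∉ E := by
    intro h
    rw [symmDiff_single_mem h] at hmain
    rw [Finset.card_erase_of_mem h] at hmain
    omega
  -- distance bound for t₂ against t'
  have hd2 : (A ∆ E).card ≤ 2 := by
    have := hdist (flipSet A t₁) ht₂ t' ht'
    rwa [ham_flip] at this
  have hd3 : (B ∆ E).card ≤ 2 := by
    have := hdist (flipSet B t₁) ht₃ t' ht'
    rwa [ham_flip] at this
  -- a ∈ E and b ∈ E
  have haE : a ∈ E := by
    by_contra haE
    -- {a,c} disjoint from E, symmDiff = union, card = 2 + E.card ≤ 2, so E = ∅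
    have hdisj : Disjoint ({a, c} : Finset (Fin n)) E := by
      rw [Finset.disjoint_left]
      intro i hi
      rcases Finset.mem_insert.mp hi with rfl | hi
      · exact haE
      · rw [Finset.mem_singleton] at hi; subst hi; exact hcE
    have : ({a, c} : Finset (Fin n)) ∆ E = {a, c} ∪ E := hdisj.symmDiff_eq_sup
    rw [hAeq, this, Finset.card_union_of_disjoint hdisj] at hd2
    have h2 : ({a, c} : Finset (Fin n)).card = 2 := by
      rw [Finset.card_insert_of_notMem (by simp [hac]), Finset.card_singleton]
    have hE0 : E.card = 0 := by omega
    have : E = ∅ := Finset.card_eq_zero.mp hE0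
    rw [this, symmDiff_single_not (by simp)] at hmain
    simp at hmain
  have hbE : b ∈ E := by
    by_contra hbE
    have hdisj : Disjoint ({b, c} : Finset (Fin n)) E := by
      rw [Finset.disjoint_left]
      intro i hi
      rcases Finset.mem_insert.mp hi with rfl | hi
      · exact hbE
      · rw [Finset.mem_singleton] at hi; subst hi; exact hcE
    have : ({b, c} : Finset (Fin n)) ∆ E = {b, c} ∪ E := hdisj.symmDiff_eq_sup
    rw [hBeq, this, Finset.card_union_of_disjoint hdisj] at hd3
    have h2 : ({b, c} : Finset (Fin n)).card = 2 := by
      rw [Finset.card_insert_of_notMem (by simp [hbc]), Finset.card_singleton]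
    have hE0 : E.card = 0 := by omega
    have : E = ∅ := Finset.card_eq_zero.mp hE0
    rw [this, symmDiff_single_not (by simp)] at hmain
    simp at hmain
  -- E = {a, b}
  have habsub : ({a, b} : Finset (Fin n)) ⊆ E := by
    intro i hi
    rcases Finset.mem_insert.mp hi with rfl | hi
    · exact haE
    · rw [Finset.mem_singleton] at hi; subst hi; exact hbE
  have habcard : ({a, b} : Finset (Fin n)).card = 2 := by
    rw [Finset.card_insert_of_notMem (by simp [hab]), Finset.card_singleton]
  have hEeq : E = {a, b} := (Finset.eq_of_subset_of_card_le habsub (by rw [habcard]; exact hEcard)).symm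
  -- t' = flipSet {a,b} t₁
  have ht'eq : t' = flipSet ({a, b} : Finset (Fin n)) t₁ := by
    funext i
    have hiff : (t₁ i ≠ t' i) ↔ i ∈ ({a, b} : Finset (Fin n)) := by
      rw [← hEeq, hE]; simp
    by_cases h : i ∈ ({a, b} : Finset (Fin n))
    · have : t₁ i ≠ t' i := hiff.mpr h
      simp [flipSet, h]
      cases ht1 : t₁ i <;> cases ht2 : t' i <;> simp_all
    · have : ¬(t₁ i ≠ t' i) := fun hh => h (hiff.mp hh)
      push_neg at this
      simp [flipSet, h, this.symm]
  -- s = maj t₁ t₂ t' = flipSet {a} t₁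
  have hseq : maj t₁ (flipSet A t₁) t' = flipSet ({a} : Finset (Fin n)) t₁ := by
    rw [ht'eq, hAeq]
    funext i
    by_cases h1 : i = a
    · subst h1
      simp [maj, flipSet, hab]
      try (cases t₁ i <;> simp)
    · by_cases h2 : i = b
      · subst h2
        simp [maj, flipSet, Ne.symm hab, hbc, h1]
        try (cases t₁ i <;> simp)
      · by_cases h3 : i = c
        · subst h3
          simp [maj, flipSet, Ne.symm hac, Ne.symm hbc, h1]
          try (cases t₁ i <;> simp)
        · simp [maj, flipSet, h1, h2, h3]
          try (cases t₁ i <;> simp)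
  have hsR : flipSet ({a} : Finset (Fin n)) t₁ ∈ R := by
    rw [← hseq]
    exact hclosed t₁ ht₁ (flipSet A t₁) ht₂ t' ht'
  -- d(s, t₃) = |{a} ∆ {b,c}| = 3 > 2
  have hfinal := hdist (flipSet ({a} : Finset (Fin n)) t₁) hsR (flipSet B t₁) ht₃
  rw [ham_flip] at hfinal
  have hF : (Finset.univ.filter fun i => t₁ i ≠ flipSet B t₁ i) = B := by
    ext i
    by_cases h : i ∈ B <;> simp [flipSet, h] <;> cases t₁ i <;> simp
  rw [hF, hBeq] at hfinal
  have : ({a} : Finset (Fin n)) ∆ ({b, c} : Finset (Fin n)) = {a, b, c} := by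
    rw [symmDiff_single_not (by simp [hab, hac])]
  have hcard3 : ({a, b, c} : Finset (Fin n)).card = 3 := by
    rw [Finset.card_insert_of_notMem (by simp [hab, hac]),
        Finset.card_insert_of_notMem (by simp [hbc]), Finset.card_singleton]
  rw [this, hcard3] at hfinal
  omega
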